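/- Suppose p, q ∈ Q⁰_λ and there is ε < λ such that for every α ∈ C^q ∖ ε, letting β₀ = sup(C^p ∩ (α+1)) and β₁ = min(C^p ∖ min(C^q ∖ (α+1))), there is an ultrafilter e on [β₀, β₁) ∩ C^p with d^q_α = { A ∩ Z^q_α : A ∈ ⊕^e { d^p_β : β ∈ [β₀,β₁) ∩ C^p } }. Then p ≤⁰ q, i.e., fil(p) ⊆ fil(q). -/

import Mathlib

open Set

noncomputable section

def IsUltrafilterOn {α : Type*} (Z : Set α) (d : Set (Set α)) : Prop :=
  (∀ A ∈ d, A ⊆ Z) ∧ Z ∈ d ∧ ∅ ∉ d ∧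
  (∀ A B : Set α, A ∈ d → A ⊆ B → B ⊆ Z → B ∈ d) ∧
  (∀ A B : Set α, A ∈ d → B ∈ d → A ∩ B ∈ d) ∧
  (∀ A : Set α, A ⊆ Z → (A ∈ d ∨ Z \ A ∈ d))

def IsNonprincipalOn {α : Type*} (Z : Set α) (d : Set (Set α)) : Prop :=
  IsUltrafilterOn Z d ∧ ∀ x : α, {x} ∉ d

def IsClubIn (C : Set Ordinal) (lam : Ordinal) : Prop :=
  C ⊆ Iio lam ∧ (∀ β < lam, ∃ δ ∈ C, β < δ) ∧
  (∀ β < lam, β ≠ 0 → sSup (C ∩ Iio β) = β → β ∈ C)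

def nextIn (C : Set Ordinal) (δ : Ordinal) : Ordinal := sInf (C \ Iic δ)

/-- An element of `Q⁰_λ`: a club `C` of limit ordinals below `λ`, together with
a non-principal ultrafilter `d δ` on the interval `Z_δ = [δ, min(C ∖ (δ+1)))` for each `δ ∈ C`. -/
structure QZero (lam : Ordinal) where
  C : Set Ordinal
  d : Ordinal → Set (Set Ordinal)
  club : IsClubIn C lam
  limit : ∀ δ ∈ C, Order.IsSuccLimit δ
  ultra : ∀ δ ∈ C, IsNonprincipalOn (Ico δ (nextIn C δ)) (d δ)

def QZero.Z {lam : Ordinal} (p : QZero lam) (δ : Ordinal) : Set Ordinal :=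
  Ico δ (nextIn p.C δ)

def fil {lam : Ordinal} (p : QZero lam) : Set (Set Ordinal) :=
  {A | A ⊆ Iio lam ∧ ∃ ε < lam, ∀ δ ∈ p.C, ε ≤ δ → A ∩ p.Z δ ∈ p.d δ}

def le0 {lam : Ordinal} (p q : QZero lam) : Prop := fil p ⊆ fil q

def filG {lam : Ordinal} (G : Set (QZero lam)) : Set (Set Ordinal) :=
  ⋃ p ∈ G, fil p

/-- The sum `⊕^e_{x∈X} d_x` of the ultrafilters `d x` on `Z x` along an ultrafilter `e`
on `X`. -/
def eSum (X : Set Ordinal) (e : Set (Set Ordinal)) (Z : Ordinal → Set Ordinal)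
    (d : Ordinal → Set (Set Ordinal)) : Set (Set Ordinal) :=
  {A | A ⊆ (⋃ x ∈ X, Z x) ∧ {x | x ∈ X ∧ Z x ∩ A ∈ d x} ∈ e}

lemma sup_Iic_mem {lam : Ordinal} {C : Set Ordinal} (hC : IsClubIn C lam)
    {α : Ordinal} (hα : α < lam) (hne : (C ∩ Iic α).Nonempty) :
    sSup (C ∩ Iic α) ∈ C ∧ sSup (C ∩ Iic α) ≤ α := by
  have hbdd : BddAbove (C ∩ Iic α) := ⟨α, fun x hx => hx.2⟩
  have hle : sSup (C ∩ Iic α) ≤ α := csSup_le hne (fun x hx => hx.2)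
  refine ⟨?_, hle⟩
  by_cases hmem : sSup (C ∩ Iic α) ∈ C ∩ Iic α
  · exact hmem.1
  · obtain ⟨s, hs⟩ := hne
    have hslt : s < sSup (C ∩ Iic α) :=
      lt_of_le_of_ne (le_csSup hbdd hs) (fun h => hmem (h ▸ hs))
    have hne0 : sSup (C ∩ Iic α) ≠ 0 := fun h => by
      rw [h] at hslt; exact (not_lt_of_ge (zero_le (a := s))) hslt
    have heq : sSup (C ∩ Iio (sSup (C ∩ Iic α))) = sSup (C ∩ Iic α) := by
      apply le_antisymm
      · exact csSup_le ⟨s, hs.1, hslt⟩ (fun x hx => le_of_lt hx.2)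
      · refine csSup_le ⟨s, hs⟩ (fun x hx => le_csSup ⟨sSup (C ∩ Iic α), fun y hy => le_of_lt hy.2⟩
          ⟨hx.1, lt_of_le_of_ne (le_csSup hbdd hx) (fun h => hmem (h ▸ hx))⟩)
    exact hC.2.2 _ (lt_of_le_of_lt hle hα) hne0 heq

lemma nextIn_mem {lam : Ordinal} {C : Set Ordinal} (hC : IsClubIn C lam)
    {δ : Ordinal} (hδ : δ < lam) : nextIn C δ ∈ C ∧ δ < nextIn C δ := by
  obtain ⟨x, hxC, hxgt⟩ := hC.2.1 δ hδ
  have hne : (C \ Iic δ).Nonempty := ⟨x, hxC, not_le.2 hxgt⟩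
  have := csInf_mem hne
  exact ⟨this.1, not_le.1 this.2⟩

lemma lt_nextIn_sup {lam : Ordinal} {C : Set Ordinal} (hC : IsClubIn C lam)
    {γ : Ordinal} (hγ : γ < lam) (hne : (C ∩ Iic γ).Nonempty) :
    γ < nextIn C (sSup (C ∩ Iic γ)) := by
  by_contra hcon
  push_neg at hcon
  have hβ := sup_Iic_mem hC hγ hne
  have hβlam : sSup (C ∩ Iic γ) < lam := lt_of_le_of_lt hβ.2 hγ
  have hν := nextIn_mem hC hβlam
  have : nextIn C (sSup (C ∩ Iic γ)) ≤ sSup (C ∩ Iic γ) :=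
    le_csSup ⟨γ, fun x hx => hx.2⟩ ⟨hν.1, hcon⟩
  exact absurd this (not_le.2 hν.2)

/-- If for all large enough `α ∈ C^q` the ultrafilter `d^q_α` is (the trace on `Z^q_α` of)
a sum `⊕^e { d^p_β : β ∈ [β₀,β₁) ∩ C^p }` for some ultrafilter `e` on `[β₀,β₁) ∩ C^p`,
where `β₀ = sup(C^p ∩ (α+1))` and `β₁ = min(C^p ∖ min(C^q ∖ (α+1)))`, then `p ≤⁰ q`. -/
theorem statement15 (κ : Cardinal.{0}) (hreg : κ.IsRegular) (hunc : Cardinal.aleph0 < κ)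
    (p q : QZero κ.ord)
    (h : ∃ ε < κ.ord, ∀ α ∈ q.C, ε ≤ α →
      ∃ e : Set (Set Ordinal),
        IsUltrafilterOn
          (Ico (sSup (p.C ∩ Iic α)) (sInf (p.C \ Iio (nextIn q.C α))) ∩ p.C) e ∧
        q.d α = {B : Set Ordinal |
          ∃ A ∈ eSum (Ico (sSup (p.C ∩ Iic α)) (sInf (p.C \ Iio (nextIn q.C α))) ∩ p.C)
              e p.Z p.d, B = A ∩ q.Z α}) :
    le0 p q := by
  obtain ⟨ε, hεlt, hε⟩ := h
  intro A hA
  obtain ⟨hAsub, ε₁, hε₁lt, hA1⟩ := hA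
  obtain ⟨γ, hγC, hγgt⟩ := p.club.2.1 ε₁ hε₁lt
  have hγlt : γ < κ.ord := p.club.1 hγC
  refine ⟨hAsub, max ε γ, max_lt hεlt hγlt, ?_⟩
  intro α hαC hαge
  have hαlt : α < κ.ord := q.club.1 hαC
  obtain ⟨e, he, hd⟩ := hε α hαC (le_trans (le_max_left _ _) hαge)
  set β₀ := sSup (p.C ∩ Iic α) with hβ₀def
  set ν := nextIn q.C α with hνdef
  set β₁ := sInf (p.C \ Iio ν) with hβ₁def
  set X := Ico β₀ β₁ ∩ p.C with hXdef
  have hγle : γ ≤ α := le_trans (le_max_right _ _) hαge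
  have hneS : (p.C ∩ Iic α).Nonempty := ⟨γ, hγC, hγle⟩
  have hβ₀ := sup_Iic_mem p.club hαlt hneS
  have hγβ₀ : γ ≤ β₀ := le_csSup ⟨α, fun x hx => hx.2⟩ ⟨hγC, hγle⟩
  have hν := nextIn_mem q.club hαlt
  have hνlt : ν < κ.ord := q.club.1 hν.1
  obtain ⟨δ, hδC, hδgt⟩ := p.club.2.1 ν hνlt
  have hne1 : (p.C \ Iio ν).Nonempty := ⟨δ, hδC, not_lt.2 hδgt.le⟩
  have hβ₁mem : β₁ ∈ p.C \ Iio ν := csInf_mem hne1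
  have hνβ₁ : ν ≤ β₁ := not_lt.1 hβ₁mem.2
  have hZq : q.Z α = Ico α ν := by rw [QZero.Z, hνdef]
  have hcover : q.Z α ⊆ ⋃ x ∈ X, p.Z x := by
    rw [hZq]
    intro x hx
    have hxlt : x < κ.ord := lt_trans hx.2 hνlt
    have hneSx : (p.C ∩ Iic x).Nonempty := ⟨γ, hγC, le_trans hγle hx.1⟩
    have hβ := sup_Iic_mem p.club hxlt hneSx
    have hβnext := lt_nextIn_sup p.club hxlt hneSx
    have hβ₀β : β₀ ≤ sSup (p.C ∩ Iic x) :=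
      csSup_le_csSup ⟨x, fun y hy => hy.2⟩ hneS
        (fun y hy => ⟨hy.1, le_trans hy.2 hx.1⟩)
    have hββ₁ : sSup (p.C ∩ Iic x) < β₁ :=
      lt_of_le_of_lt hβ.2 (lt_of_lt_of_le hx.2 hνβ₁)
    exact Set.mem_biUnion (⟨⟨hβ₀β, hββ₁⟩, hβ.1⟩ : _ ∈ X) ⟨hβ.2, hβnext⟩
  set U := ⋃ x ∈ X, p.Z x with hU
  have hXe : {x | x ∈ X ∧ p.Z x ∩ (A ∩ U) ∈ p.d x} ∈ e := by
    have hXeq : {x | x ∈ X ∧ p.Z x ∩ (A ∩ U) ∈ p.d x} = X := by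
      ext x
      constructor
      · exact fun h => h.1
      · intro hx
        refine ⟨hx, ?_⟩
        have hsub : p.Z x ⊆ U := fun y hy => Set.mem_biUnion hx hy
        have heq : p.Z x ∩ (A ∩ U) = A ∩ p.Z x := by
          ext y
          exact ⟨fun ⟨h1, h2, _⟩ => ⟨h2, h1⟩, fun ⟨h2, h1⟩ => ⟨h1, h2, hsub h1⟩⟩
        rw [heq]
        exact hA1 x hx.2 (le_of_lt (lt_of_lt_of_le hγgt (le_trans hγβ₀ hx.1.1)))
    rw [hXeq]
    exact he.2.1
  rw [hd]
  refine ⟨A ∩ U, ⟨inter_subset_right, hXe⟩, ?_⟩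
  ext y
  constructor
  · rintro ⟨h1, h2⟩
    exact ⟨⟨h1, hcover h2⟩, h2⟩
  · rintro ⟨⟨h1, _⟩, h2⟩
    exact ⟨h1, h2⟩
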